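/- Let α > 1 be irrational with convergent numerators p_n satisfying p_n > 2p_{n-1} for all n greater than some N (equivalently, only finitely many partial quotients equal 1). Then the set {p_n} of convergent numerators admits more than one avoiding partition of ℕ⁺. -/

import Mathlib

/-- `E α n` is the error `n - qα` where `qα` is the integer multiple of `α`
nearest to `n` (for `α > 1`, this multiple is `round (n/α) * α`). -/
noncomputable def E (α : ℝ) (n : ℕ) : ℝ := (n : ℝ) - round ((n : ℝ) / α) * α

/-- `A_α`: positive integers whose nearest multiple of `α` exceeds them. -/
def Aset (α : ℝ) : Set ℕ := {n | 0 < n ∧ E α n < 0}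

/-- `B_α`: positive integers whose nearest multiple of `α` is below them. -/
def Bset (α : ℝ) : Set ℕ := {n | 0 < n ∧ 0 < E α n}

/-- `S_α`: positive integers not expressible as a sum of two distinct elements
of `A_α` nor of two distinct elements of `B_α`. -/
def Sset (α : ℝ) : Set ℕ :=
  {s | 0 < s ∧ (∀ x ∈ Aset α, ∀ y ∈ Aset α, x ≠ y → x + y ≠ s) ∧
       (∀ x ∈ Bset α, ∀ y ∈ Bset α, x ≠ y → x + y ≠ s)}
/-- Data of the continued fraction expansion `α = [a 0; a 1, a 2, ...]` of an
irrational `α > 1`, with `t n` the successive complete quotients, and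
`p n / q n` the convergents. -/
structure CF (α : ℝ) where
  a : ℕ → ℕ
  t : ℕ → ℝ
  p : ℕ → ℕ
  q : ℕ → ℕ
  t0 : t 0 = α
  ha : ∀ n, 1 ≤ a n
  floor_t : ∀ n, (a n : ℝ) = ⌊t n⌋
  t_rec : ∀ n, t n = a n + 1 / t (n + 1)
  p0 : p 0 = a 0
  p1 : p 1 = a 1 * a 0 + 1
  p_rec : ∀ n, p (n + 2) = a (n + 2) * p (n + 1) + p n
  q0 : q 0 = 1
  q1 : q 1 = a 1
  q_rec : ∀ n, q (n + 2) = a (n + 2) * q (n + 1) + q n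

/-- The numerators extended by two initial terms: `P 0 = p_{-2} = 0`,
`P 1 = p_{-1} = 1`, and `P (n+2) = p n`. -/
def CF.P {α : ℝ} (c : CF α) : ℕ → ℕ
  | 0 => 0
  | 1 => 1
  | n + 2 => c.p n
/-- The graph `G S` on the positive integers with an edge between distinct
`x, y` whenever `x + y ∈ S`. -/
def G (S : Set ℕ+) : SimpleGraph ℕ+ where
  Adj x y := x ≠ y ∧ x + y ∈ S
  symm := by
    constructor
    intro x y h
    exact ⟨h.1.symm, by rw [add_comm]; exact h.2⟩
  loopless := by
    constructor
    intro x h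
    exact h.1 rfl

/-- The partition `{A, Aᶜ}` of `ℕ+` avoids `S`: no two distinct elements of
the same part sum to an element of `S`. -/
def Avoids (A S : Set ℕ+) : Prop :=
  (∀ x ∈ A, ∀ y ∈ A, x ≠ y → x + y ∉ S) ∧
  (∀ x ∈ Aᶜ, ∀ y ∈ Aᶜ, x ≠ y → x + y ∉ S)

/-- `S` is avoidable: some partition of `ℕ+` avoids it. -/
def Avoidable (S : Set ℕ+) : Prop := ∃ A, Avoids A S

/-- `S` is uniquely avoidable: exactly one partition of `ℕ+` avoids it. -/
def UniquelyAvoidable (S : Set ℕ+) : Prop :=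
  ∃ A, Avoids A S ∧ ∀ A', Avoids A' S → A' = A ∨ A' = Aᶜ

namespace CFaux

variable {α : ℝ} (c : CF α)

def Q : ℕ → ℕ
  | 0 => 1
  | 1 => 0
  | n + 2 => c.q n

noncomputable def e (m : ℕ) : ℝ := (Q c m : ℝ) * α - (c.P m : ℝ)

lemma t_ge_one (n : ℕ) : 1 ≤ c.t n := by
  have h1 : (c.a n : ℝ) ≤ c.t n := by
    rw [c.floor_t n]; exact Int.floor_le _
  have h2 : (1 : ℝ) ≤ (c.a n : ℝ) := by exact_mod_cast c.ha n
  linarith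

lemma t_gt_one (n : ℕ) : 1 < c.t n := by
  have h := c.t_rec n
  have h1 : (1 : ℝ) ≤ (c.a n : ℝ) := by exact_mod_cast c.ha n
  have h2 : 0 < c.t (n+1) := lt_of_lt_of_le zero_lt_one (t_ge_one c (n+1))
  have : 0 < 1 / c.t (n+1) := by positivity
  linarith

lemma P_rec (m : ℕ) : c.P (m + 2) = c.a m * c.P (m + 1) + c.P m := by
  match m with
  | 0 => show c.p 0 = c.a 0 * 1 + 0; rw [c.p0]; ring
  | 1 => show c.p 1 = c.a 1 * c.p 0 + 1; rw [c.p1, c.p0]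
  | n + 2 => simp [CF.P, c.p_rec n]

lemma Q_rec (m : ℕ) : Q c (m + 2) = c.a m * Q c (m + 1) + Q c m := by
  match m with
  | 0 => show c.q 0 = c.a 0 * 0 + 1; rw [c.q0]; ring
  | 1 => show c.q 1 = c.a 1 * c.q 0 + 0; rw [c.q1, c.q0]; ring
  | n + 2 => simp [Q, c.q_rec n]

lemma e_rec (m : ℕ) : e c (m + 2) = (c.a m : ℝ) * e c (m + 1) + e c m := by
  simp only [e, P_rec, Q_rec]
  push_cast
  ring

lemma e_zero : e c 0 = α := by simp [e, Q, CF.P]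

lemma e_one : e c 1 = -1 := by simp [e, Q, CF.P]

lemma key (hα : 1 < α) : ∀ n, c.t n * e c (n + 1) = - e c n := by
  intro n
  induction n with
  | zero => rw [e_zero, e_one, c.t0]; ring
  | succ n ih =>
    have ht1 : 0 < c.t (n+1) := lt_trans zero_lt_one (t_gt_one c (n+1))
    have htr := c.t_rec n
    have hrec := e_rec c n
    have h2 : e c (n + 2) = ((c.a n : ℝ) - c.t n) * e c (n+1) := by
      linear_combination hrec + ih
    have h3 : c.t (n+1) * ((c.a n : ℝ) - c.t n) = -1 := by
      rw [htr]; field_simp; ring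
    calc c.t (n+1) * e c (n+2) = (c.t (n+1) * ((c.a n : ℝ) - c.t n)) * e c (n+1) := by
          rw [h2]; ring
      _ = - e c (n+1) := by rw [h3]; ring

lemma e_ne (hα : 1 < α) : ∀ n, e c n ≠ 0 := by
  intro n
  induction n with
  | zero => rw [e_zero]; linarith
  | succ n ih =>
    intro h
    have hk := key c hα n
    rw [h, mul_zero] at hk
    exact ih (by linarith)

lemma e_opp (hα : 1 < α) (n : ℕ) : e c n * e c (n + 1) < 0 := by
  have hk := key c hα n
  have ht : 0 < c.t n := lt_trans zero_lt_one (t_gt_one c n)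
  have hne := e_ne c hα n
  have : e c (n+1) = - e c n / c.t n := by field_simp at hk ⊢; linarith
  rw [this]
  have : e c n * (- e c n / c.t n) = - (e c n)^2 / c.t n := by ring
  rw [this]
  have h2 : 0 < (e c n)^2 := by positivity
  have : -(e c n)^2 < 0 := by linarith
  exact div_neg_of_neg_of_pos this ht


lemma e_abs_lt_one (hα : 1 < α) : ∀ k, |e c (k + 2)| < 1 := by
  have hstep : ∀ n, 1 ≤ n → |e c (n + 1)| < |e c n| := by
    intro n _
    have hk := key c hα n
    have ht : 1 < c.t n := t_gt_one c n
    have hne : e c (n+1) ≠ 0 := e_ne c hα (n+1)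
    have h1 : |c.t n * e c (n+1)| = |e c n| := by rw [hk, abs_neg]
    rw [abs_mul] at h1
    have h2 : 0 < |e c (n+1)| := abs_pos.mpr hne
    have h3 : |c.t n| = c.t n := abs_of_pos (by linarith)
    nlinarith
  intro k
  induction k with
  | zero =>
    have := hstep 1 le_rfl
    rw [e_one] at this
    simpa using this
  | succ k ih => exact lt_trans (hstep (k+2) (by omega)) ih

lemma q_pos : ∀ n, 0 < c.q n := by
  have h : ∀ n, 0 < c.q n ∧ 0 < c.q (n+1) := by
    intro n
    induction n with
    | zero => refine ⟨by rw [c.q0]; norm_num, by rw [c.q1]; exact c.ha 1⟩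
    | succ n ih =>
      refine ⟨ih.2, ?_⟩
      rw [c.q_rec n]
      have := c.ha (n+2)
      nlinarith [ih.1, ih.2]
  exact fun n => (h n).1

lemma q_mono (n : ℕ) : c.q n ≤ c.q (n + 1) := by
  match n with
  | 0 => rw [c.q0, c.q1]; exact c.ha 1
  | n + 1 =>
    rw [c.q_rec n]
    have := c.ha (n+2)
    nlinarith [q_pos c n, q_pos c (n+1)]

lemma p_pos : ∀ n, 0 < c.p n := by
  have h : ∀ n, 0 < c.p n ∧ 0 < c.p (n+1) := by
    intro n
    induction n with
    | zero =>
      constructor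
      · rw [c.p0]; exact c.ha 0
      · rw [c.p1]; nlinarith [c.ha 0, c.ha 1]
    | succ n ih =>
      refine ⟨ih.2, ?_⟩
      rw [c.p_rec n]
      have := c.ha (n+2)
      nlinarith [ih.1, ih.2]
  exact fun n => (h n).1

lemma p_strictMono : StrictMono c.p := by
  apply strictMono_nat_of_lt_succ
  intro n
  match n with
  | 0 => rw [c.p0, c.p1]; nlinarith [c.ha 0, c.ha 1]
  | n + 1 =>
    rw [c.p_rec n]
    have := c.ha (n+2)
    nlinarith [p_pos c n, p_pos c (n+1)]

lemma p_lb (n : ℕ) : n < c.p n := by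
  induction n with
  | zero => exact p_pos c 0
  | succ n ih => have h2 : c.p n < c.p (n+1) := p_strictMono c (by omega); omega

lemma p_unb (x : ℕ) : ∃ n, x < c.p n := ⟨x, p_lb c x⟩

lemma det (m : ℕ) : (c.P (m+1) : ℤ) * (Q c m : ℤ) - (c.P m : ℤ) * (Q c (m+1) : ℤ) = (-1)^m := by
  induction m with
  | zero => simp [CF.P, Q]
  | succ m ih =>
    have hP := P_rec c m
    have hQ := Q_rec c m
    have hP' : (c.P (m+2) : ℤ) = (c.a m : ℤ) * (c.P (m+1) : ℤ) + (c.P m : ℤ) := by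
      exact_mod_cast congrArg (Nat.cast : ℕ → ℤ) hP
    have hQ' : (Q c (m+2) : ℤ) = (c.a m : ℤ) * (Q c (m+1) : ℤ) + (Q c m : ℤ) := by
      exact_mod_cast congrArg (Nat.cast : ℕ → ℤ) hQ
    rw [hP', hQ']
    have : ((-1:ℤ))^(m+1) = -(-1)^m := by ring
    rw [this, ← ih]
    ring

lemma p_eq (n : ℕ) : (c.p n : ℝ) = (c.q n : ℝ) * α - e c (n + 2) := by
  have : e c (n+2) = (c.q n : ℝ) * α - (c.p n : ℝ) := rfl
  rw [this]; ring

/-- The core "best approximation" engine. -/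
lemma engine (hα : 1 < α) (n : ℕ) (R X : ℤ)
    (hR0 : 0 < R) (hRq : R < (c.q n : ℤ))
    (hcase : |(R : ℝ) * α - X| < |e c (n+2)| ∨
      (|(R : ℝ) * α - X| < 2 * |e c (n+2)| ∧ 0 < ((R : ℝ) * α - X) * e c (n+2))) :
    False := by
  set m := n + 2 with hm
  obtain ⟨u, v, hX, hR⟩ : ∃ u v : ℤ,
      u * (c.P m : ℤ) + v * (c.P (m+1) : ℤ) = X ∧
      u * (Q c m : ℤ) + v * (Q c (m+1) : ℤ) = R := by
    have hdet : (c.P (m+1) : ℤ) * (Q c m : ℤ) - (c.P m : ℤ) * (Q c (m+1) : ℤ) = (-1)^m :=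
      det c m
    rcases Nat.even_or_odd m with hpar | hpar
    · have hd : ((-1:ℤ))^m = 1 := hpar.neg_one_pow
      rw [hd] at hdet
      exact ⟨R * (c.P (m+1) : ℤ) - X * (Q c (m+1) : ℤ), X * (Q c m : ℤ) - R * (c.P m : ℤ),
        by linear_combination X * hdet, by linear_combination R * hdet⟩
    · have hd : ((-1:ℤ))^m = -1 := hpar.neg_one_pow
      rw [hd] at hdet
      exact ⟨-(R * (c.P (m+1) : ℤ) - X * (Q c (m+1) : ℤ)), -(X * (Q c m : ℤ) - R * (c.P m : ℤ)),
        by linear_combination (-X) * hdet, by linear_combination (-R) * hdet⟩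
  have hQmq : (Q c m : ℤ) = (c.q n : ℤ) := rfl
  have hQm1q : (Q c (m+1) : ℤ) = (c.q (n+1) : ℤ) := rfl
  have hQmpos : 0 < (Q c m : ℤ) := by rw [hQmq]; exact_mod_cast q_pos c n
  have hQmono : (Q c m : ℤ) ≤ (Q c (m+1) : ℤ) := by
    rw [hQmq, hQm1q]; exact_mod_cast q_mono c n
  have hem : e c m = ((Q c m : ℤ) : ℝ) * α - ((c.P m : ℤ) : ℝ) := by
    simp [e]
  have hem1 : e c (m+1) = ((Q c (m+1) : ℤ) : ℝ) * α - ((c.P (m+1) : ℤ) : ℝ) := by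
    simp [e]
  have hXr : (u : ℝ) * ((c.P m : ℤ) : ℝ) + (v : ℝ) * ((c.P (m+1) : ℤ) : ℝ) = (X : ℝ) := by
    exact_mod_cast congrArg (Int.cast : ℤ → ℝ) hX
  have hRr : (u : ℝ) * ((Q c m : ℤ) : ℝ) + (v : ℝ) * ((Q c (m+1) : ℤ) : ℝ) = (R : ℝ) := by
    exact_mod_cast congrArg (Int.cast : ℤ → ℝ) hR
  have hRX : (R : ℝ) * α - X = (u : ℝ) * e c m + (v : ℝ) * e c (m+1) := by
    rw [hem, hem1]
    linear_combination α * hRr.symm - hXr.symm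
  have hopp : e c m * e c (m+1) < 0 := e_opp c hα m
  have hene : e c m ≠ 0 := e_ne c hα m
  have hRq' : R < (Q c m : ℤ) := by rw [hQmq]; exact hRq
  clear hX hXr hem hem1 hQmq hQm1q
  rcases lt_trichotomy u 0 with hu0 | hu0 | hu0
  · rcases lt_trichotomy v 0 with hv0 | hv0 | hv0
    · nlinarith [hR, hQmpos, hQmono]
    · rw [hv0] at hR; nlinarith [hR, hQmpos]
    · have hu1 : (u : ℝ) ≤ -1 := by exact_mod_cast (by omega : u ≤ -1)
      have hv1 : (1 : ℝ) ≤ (v : ℝ) := by exact_mod_cast (by omega : 1 ≤ v)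
      rcases lt_or_gt_of_ne hene with hemneg | hempos
      · have hem1pos : 0 < e c (m+1) := by nlinarith
        have hsum : (R:ℝ) * α - X ≥ - e c m + e c (m+1) := by
          rw [hRX]; nlinarith
        have habs : |e c m| = - e c m := abs_of_neg hemneg
        rcases hcase with h1 | ⟨h2, h3⟩
        · rw [habs, abs_lt] at h1; linarith
        · nlinarith
      · have hem1neg : e c (m+1) < 0 := by nlinarith
        have hsum : (R:ℝ) * α - X ≤ - (e c m) + e c (m+1) := by
          rw [hRX]; nlinarith
        have habs : |e c m| = e c m := abs_of_pos hempos
        rcases hcase with h1 | ⟨h2, h3⟩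
        · rw [habs, abs_lt] at h1; linarith
        · nlinarith
  · rw [hu0] at hR
    simp only [zero_mul, zero_add] at hR
    rcases lt_trichotomy v 0 with hv0 | hv0 | hv0
    · nlinarith [hR]
    · rw [hv0] at hR; simp at hR; omega
    · have : (Q c (m+1) : ℤ) ≤ v * (Q c (m+1) : ℤ) := by nlinarith
      omega
  · rcases lt_trichotomy v 0 with hv0 | hv0 | hv0
    · have hu2 : 2 ≤ u := by
        by_contra hcon
        have hu1 : u = 1 := by omega
        rw [hu1] at hR
        have : v * (Q c (m+1) : ℤ) ≤ -(Q c (m+1) : ℤ) := by nlinarith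
        omega
      have hu2r : (2 : ℝ) ≤ (u : ℝ) := by exact_mod_cast hu2
      have hv1 : (v : ℝ) ≤ -1 := by exact_mod_cast (by omega : v ≤ -1)
      rcases lt_or_gt_of_ne hene with hemneg | hempos
      · have hem1pos : 0 < e c (m+1) := by nlinarith
        have hsum : (R:ℝ) * α - X ≤ 2 * e c m - e c (m+1) := by
          rw [hRX]; nlinarith
        have habs : |e c m| = - e c m := abs_of_neg hemneg
        rcases hcase with h1 | ⟨h2, h3⟩
        · rw [habs, abs_lt] at h1; linarith
        · rw [habs, abs_lt] at h2; linarith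
      · have hem1neg : e c (m+1) < 0 := by nlinarith
        have hsum : (R:ℝ) * α - X ≥ 2 * e c m - e c (m+1) := by
          rw [hRX]; nlinarith
        have habs : |e c m| = e c m := abs_of_pos hempos
        rcases hcase with h1 | ⟨h2, h3⟩
        · rw [habs, abs_lt] at h1; linarith
        · rw [habs, abs_lt] at h2; linarith
    · rw [hv0] at hR; simp only [zero_mul, add_zero] at hR
      have : (Q c m : ℤ) ≤ u * (Q c m : ℤ) := by nlinarith
      omega
    · have h1 : (Q c m : ℤ) ≤ u * (Q c m : ℤ) := le_mul_of_one_le_left hQmpos.le (by omega)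
      have h2 : 0 < v * (Q c (m+1) : ℤ) := mul_pos hv0 (lt_of_lt_of_le hQmpos hQmono)
      linarith


lemma irr_not_eq (hirr : Irrational α) {k l : ℤ} (hk : k ≠ 0) : (k : ℝ) * α ≠ (l : ℝ) :=
  fun h => ((hirr.intCast_mul hk).ne_int l) h

lemma E_facts (hα : 1 < α) (hirr : Irrational α) {x : ℕ} (hx : 0 < x) :
    |E α x| < α / 2 ∧ E α x ≠ 0 := by
  have hα0 : 0 < α := by linarith
  set r := round ((x:ℝ)/α) with hr
  have hEeq : E α x = (x : ℝ) - r * α := rfl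
  constructor
  · have h1 : |(x:ℝ)/α - r| ≤ 1/2 := abs_sub_round _
    have hEeq2 : E α x = ((x:ℝ)/α - r) * α := by rw [hEeq]; field_simp
    have h2 : |E α x| ≤ α/2 := by
      rw [hEeq2, abs_mul, abs_of_pos hα0]
      nlinarith [abs_nonneg ((x:ℝ)/α - r)]
    rcases lt_or_eq_of_le h2 with h | h
    · exact h
    exfalso
    rcases (abs_eq (by positivity : (0:ℝ) ≤ α/2)).mp h with h3 | h3
    · refine irr_not_eq hirr (by omega : (2*r+1 : ℤ) ≠ 0) (l := 2*x) ?_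
      push_cast
      rw [hEeq] at h3
      linarith
    · refine irr_not_eq hirr (by omega : (2*r-1 : ℤ) ≠ 0) (l := 2*x) ?_
      push_cast
      rw [hEeq] at h3
      linarith
  · intro h0
    rw [hEeq] at h0
    rcases eq_or_ne r 0 with h | h
    · rw [h] at h0
      simp at h0
      have : (0:ℝ) < x := by exact_mod_cast hx
      linarith
    · exact irr_not_eq hirr h (l := x) (by push_cast; linarith)

lemma int_lt_of_mul (hα0 : 0 < α) {r s : ℤ} (h : (r:ℝ) * α < (s:ℝ) * α) : r < s := by
  have := lt_of_mul_lt_mul_right h hα0.le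
  exact_mod_cast this

lemma int_pos_of_mul (hα0 : 0 < α) {r : ℤ} (h : 0 < (r:ℝ) * α) : 0 < r := by
  have : ((0:ℤ):ℝ) * α < (r:ℝ) * α := by push_cast; linarith
  exact int_lt_of_mul hα0 this

set_option maxHeartbeats 1000000 in
/-- Main lemma: two distinct positive integers summing to a numerator `p n`
cannot both be in `Aset` nor both in `Bset`. -/
lemma main (hα : 1 < α) (hirr : Irrational α) (n x y : ℕ)
    (hx : 0 < x) (hxy : x < y) (hsum : x + y = c.p n) :
    ¬ (E α x < 0 ∧ E α y < 0) ∧ ¬ (0 < E α x ∧ 0 < E α y) := by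
  have hα0 : 0 < α := by linarith
  set rx := round ((x:ℝ)/α) with hrx
  set ry := round ((y:ℝ)/α) with hry
  set Ex := E α x with hEx
  set Ey := E α y with hEy
  obtain ⟨haxabs, haxne⟩ := E_facts hα hirr hx
  obtain ⟨hayabs, hayne⟩ := E_facts hα hirr (show 0 < y by omega)
  rw [← hEx] at haxabs haxne
  rw [← hEy] at hayabs hayne
  obtain ⟨hax1, hax2⟩ := abs_lt.mp haxabs
  obtain ⟨hay1, hay2⟩ := abs_lt.mp hayabs
  have hxe : (x:ℝ) = (rx:ℝ) * α + Ex := by rw [hEx]; show _ = _ + E α x; rw [E]; ring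
  have hye : (y:ℝ) = (ry:ℝ) * α + Ey := by rw [hEy]; show _ = _ + E α y; rw [E]; ring
  set em := e c (n+2) with hem
  have hemabs : |em| < 1 := e_abs_lt_one c hα n
  obtain ⟨hem1, hem2⟩ := abs_lt.mp hemabs
  have hpe : (c.p n : ℝ) = (c.q n : ℝ) * α - em := p_eq c n
  have hsr : (x:ℝ) + (y:ℝ) = (c.p n : ℝ) := by exact_mod_cast hsum
  set k : ℤ := (c.q n : ℤ) - rx - ry with hk
  have hrxa : (rx:ℝ) * α = (x:ℝ) - Ex := by linarith [hxe]
  have hrya : (ry:ℝ) * α = (y:ℝ) - Ey := by linarith [hye]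
  have hqa : (c.q n : ℝ) * α = (c.p n : ℝ) + em := by linarith [hpe]
  have hkrr : (k:ℝ) = (c.q n : ℝ) - (rx:ℝ) - (ry:ℝ) := by rw [hk]; push_cast; ring
  have hkr : (k : ℝ) * α = Ex + Ey + em := by
    rw [hkrr]; linear_combination hqa - hrxa - hrya - hsr
  clear_value rx ry Ex Ey em k
  have hxlt : (x:ℝ) ≤ (c.p n : ℝ) - 1 := by
    have : x + 1 ≤ c.p n := by omega
    have := (Nat.cast_le (α := ℝ)).mpr this
    push_cast at this; linarith
  have h2x : 2*(x:ℝ) ≤ (c.p n : ℝ) - 1 := by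
    have : 2*x + 1 ≤ c.p n := by omega
    have := (Nat.cast_le (α := ℝ)).mpr this
    push_cast at this; linarith
  have hx1 : (1:ℝ) ≤ (x:ℝ) := by exact_mod_cast hx
  constructor
  · -- both in Aset : Ex < 0, Ey < 0
    rintro ⟨hAx, hAy⟩
    have hkcases : k = 0 ∨ k = -1 := by
      have hub : (k:ℝ) * α < 1 := by rw [hkr]; linarith
      have hlb : -α - 1 < (k:ℝ) * α := by rw [hkr]; linarith
      have h1 : k < 1 := by
        by_contra hcon
        push_neg at hcon
        have : (1:ℝ) ≤ (k:ℝ) := by exact_mod_cast hcon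
        nlinarith
      have h2 : -2 < k := by
        by_contra hcon
        push_neg at hcon
        have : (k:ℝ) ≤ -2 := by exact_mod_cast hcon
        nlinarith
      omega
    rcases hkcases with hk0 | hk0
    · -- k = 0 : em = -(Ex + Ey) > 0
      rw [hk0] at hkr
      simp at hkr
      have hempos : 0 < em := by linarith
      refine engine c hα n rx (x:ℤ) ?_ ?_ (Or.inl ?_)
      · apply int_pos_of_mul hα0
        rw [hrxa]; linarith
      · apply int_lt_of_mul hα0
        push_cast
        rw [hrxa]
        have : -Ex < em := by linarith
        linarith
      · have hval : (rx:ℝ) * α - ((x:ℤ):ℝ) = -Ex := by push_cast; linarith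
        rw [hval, ← hem, abs_of_pos (by linarith : (0:ℝ) < -Ex), abs_of_pos hempos]
        linarith
    · -- k = -1 : em = -α - Ex - Ey < 0
      rw [hk0] at hkr
      have hemr : em = -α - Ex - Ey := by push_cast at hkr; linarith
      have hemneg : em < 0 := by linarith
      have hwin : 2*Ex + α < -2*em := by linarith
      have hrx1 : 1 ≤ rx := by
        have : 0 < rx := by
          apply int_pos_of_mul hα0
          rw [hrxa]; linarith
        omega
      refine engine c hα n (2*rx - 1) (2*(x:ℤ)) (by omega) ?_ (Or.inr ⟨?_, ?_⟩)
      · apply int_lt_of_mul hα0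
        push_cast
        have h5 : (2*(rx:ℝ) - 1) * α = 2*(x:ℝ) - (2*Ex + α) := by linear_combination 2*hrxa
        rw [h5]
        linarith
      · have hval : ((2*rx - 1 : ℤ):ℝ) * α - (((2*(x:ℤ) : ℤ)):ℝ) = -(2*Ex + α) := by
          push_cast; linarith
        rw [hval, ← hem, abs_of_neg (by linarith : -(2*Ex + α) < 0), abs_of_neg hemneg]
        linarith
      · have hval : ((2*rx - 1 : ℤ):ℝ) * α - (((2*(x:ℤ) : ℤ)):ℝ) = -(2*Ex + α) := by
          push_cast; linarith
        rw [hval, ← hem]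
        have h1 : -(2*Ex + α) < 0 := by linarith
        nlinarith
  · -- both in Bset : 0 < Ex, 0 < Ey
    rintro ⟨hBx, hBy⟩
    have hkcases : k = 0 ∨ k = 1 := by
      have hub : (k:ℝ) * α < α + 1 := by rw [hkr]; linarith
      have hlb : -1 < (k:ℝ) * α := by rw [hkr]; linarith
      have h1 : k < 2 := by
        by_contra hcon
        push_neg at hcon
        have : (2:ℝ) ≤ (k:ℝ) := by exact_mod_cast hcon
        nlinarith
      have h2 : -1 < k := by
        by_contra hcon
        push_neg at hcon
        have : (k:ℝ) ≤ -1 := by exact_mod_cast hcon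
        nlinarith
      omega
    rcases hkcases with hk0 | hk0
    · -- k = 0 : em = -(Ex + Ey) < 0
      rw [hk0] at hkr
      simp at hkr
      have hemneg : em < 0 := by linarith
      refine engine c hα n rx (x:ℤ) ?_ ?_ (Or.inl ?_)
      · apply int_pos_of_mul hα0
        rw [hrxa]
        have : Ex < -em := by linarith
        linarith
      · apply int_lt_of_mul hα0
        push_cast
        rw [hrxa]
        linarith
      · have hval : (rx:ℝ) * α - ((x:ℤ):ℝ) = -Ex := by push_cast; linarith
        rw [hval, ← hem, abs_of_neg (by linarith : -Ex < 0), abs_of_neg hemneg]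
        linarith
    · -- k = 1 : em = α - Ex - Ey > 0
      rw [hk0] at hkr
      have hemr : em = α - Ex - Ey := by push_cast at hkr; linarith
      have hempos : 0 < em := by linarith
      have hwin : α - 2*Ex < 2*em := by linarith
      have hrx0 : 0 ≤ rx := by
        have : -1 < rx := by
          by_contra hcon
          push_neg at hcon
          have h6 : (rx:ℝ) ≤ -1 := by exact_mod_cast (by omega : rx ≤ -1)
          nlinarith [hrxa]
        omega
      refine engine c hα n (2*rx + 1) (2*(x:ℤ)) (by omega) ?_ (Or.inr ⟨?_, ?_⟩)
      · apply int_lt_of_mul hα0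
        push_cast
        have h5 : (2*(rx:ℝ) + 1) * α = 2*(x:ℝ) + (α - 2*Ex) := by linear_combination 2*hrxa
        rw [h5]
        linarith
      · have hval : ((2*rx + 1 : ℤ):ℝ) * α - (((2*(x:ℤ) : ℤ)):ℝ) = α - 2*Ex := by
          push_cast; linarith
        rw [hval, ← hem, abs_of_pos (by linarith : (0:ℝ) < α - 2*Ex), abs_of_pos hempos]
        linarith
      · have hval : ((2*rx + 1 : ℤ):ℝ) * α - (((2*(x:ℤ) : ℤ)):ℝ) = α - 2*Ex := by
          push_cast; linarith
        rw [hval, ← hem]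
        nlinarith


open scoped Classical in
/-- The recursive coloring: below `p N` use the sign of `E α`, in each upper
half-interval `(p n / 2, p n)` use the flipped color of `p n - x`, otherwise
use the free choice `f`. -/
noncomputable def col (c : CF α) (N : ℕ) (f : ℕ → Bool) (x : ℕ) : Bool :=
  if hx : c.p N < x then
    if h2 : c.p (Nat.find (p_unb c x)) < 2 * x then
      !(col c N f (c.p (Nat.find (p_unb c x)) - x))
    else f x
  else decide (E α x < 0)
termination_by x
decreasing_by omega

lemma col_base (N : ℕ) (f : ℕ → Bool) (x : ℕ) (hx : x ≤ c.p N) :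
    col c N f x = decide (E α x < 0) := by
  rw [col]
  simp [Nat.not_lt.mpr hx]

lemma col_flip (N : ℕ) (f : ℕ → Bool) (x : ℕ) (hx : c.p N < x)
    (h2 : c.p (Nat.find (p_unb c x)) < 2 * x) :
    col c N f x = !(col c N f (c.p (Nat.find (p_unb c x)) - x)) := by
  rw [col]
  simp [hx, h2]

lemma col_free (N : ℕ) (f : ℕ → Bool) (x : ℕ) (hx : c.p N < x)
    (h2 : ¬ c.p (Nat.find (p_unb c x)) < 2 * x) :
    col c N f x = f x := by
  rw [col]
  simp [hx, h2]

lemma col_proper (hα : 1 < α) (hirr : Irrational α) (N : ℕ)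
    (hN : ∀ n, N ≤ n → 2 * c.p n < c.p (n + 1)) (f : ℕ → Bool) :
    ∀ m x y : ℕ, 0 < x → x < y → x + y = c.p m →
      col c N f x ≠ col c N f y := by
  intro m x y hx hxy hsum
  by_cases hy : y ≤ c.p N
  · have hxb : x ≤ c.p N := le_trans (le_of_lt hxy) hy
    rw [col_base c N f x hxb, col_base c N f y hy]
    have hmain := main c hα hirr m x y hx hxy hsum
    have hEx := (E_facts hα hirr hx).2
    have hEy := (E_facts hα hirr (show 0 < y by omega)).2
    rcases lt_trichotomy (E α x) 0 with h1 | h1 | h1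
    · have h2 : ¬ (E α y < 0) := fun h => hmain.1 ⟨h1, h⟩
      simp [h1, h2]
    · exact absurd h1 hEx
    · have h2 : E α y < 0 := by
        rcases lt_trichotomy (E α y) 0 with h | h | h
        · exact h
        · exact absurd h hEy
        · exact absurd ⟨h1, h⟩ hmain.2
      simp [h2, not_lt_of_gt h1]
  · push_neg at hy
    have hyp : y < c.p m := by omega
    have hNm : N < m := by
      by_contra hcon
      push_neg at hcon
      have := (p_strictMono c).monotone hcon
      omega
    have hdb : 2 * c.p (m - 1) < c.p m := by
      have := hN (m-1) (by omega)
      have he : m - 1 + 1 = m := by omega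
      rwa [he] at this
    have hfind : Nat.find (p_unb c y) = m := by
      rw [Nat.find_eq_iff]
      constructor
      · exact hyp
      · intro k hk
        push_neg
        have hk1 : k ≤ m - 1 := by omega
        have := (p_strictMono c).monotone hk1
        omega
    have h2y : c.p m < 2 * y := by omega
    rw [col_flip c N f y hy (by rw [hfind]; exact h2y)]
    rw [hfind]
    have hxeq : c.p m - y = x := by omega
    rw [hxeq]
    cases col c N f x <;> simp

end CFaux

namespace CFaux

variable {α : ℝ} (c : CF α)

lemma avoids_of_proper (hα : 1 < α) (hirr : Irrational α) (N : ℕ)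
    (hN : ∀ n, N ≤ n → 2 * c.p n < c.p (n + 1)) (f : ℕ → Bool) :
    Avoids {m : ℕ+ | col c N f (m : ℕ) = true} {m : ℕ+ | ∃ n, (m : ℕ) = c.p n} := by
  have key : ∀ x y : ℕ+, x ≠ y → (∃ n, ((x + y : ℕ+) : ℕ) = c.p n) →
      col c N f (x : ℕ) ≠ col c N f (y : ℕ) := by
    intro x y hxy ⟨n, hn⟩
    have hn' : (x : ℕ) + (y : ℕ) = c.p n := by
      rw [← hn]; exact (PNat.add_coe x y).symm
    have hne : (x : ℕ) ≠ (y : ℕ) := fun h => hxy (PNat.coe_injective h)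
    rcases lt_or_gt_of_ne hne with h | h
    · exact col_proper c hα hirr N hN f n x y x.2 h hn'
    · exact (col_proper c hα hirr N hN f n y x y.2 h (by omega)).symm
  constructor
  · intro x hx y hy hxy hS
    exact key x y hxy hS (by rw [hx, hy])
  · intro x hx y hy hxy hS
    have hx' : col c N f (x : ℕ) = false := by
      simp only [Set.mem_compl_iff, Set.mem_setOf_eq] at hx
      exact Bool.not_eq_true _ ▸ (Bool.eq_false_iff.mpr hx)
    have hy' : col c N f (y : ℕ) = false := by
      simp only [Set.mem_compl_iff, Set.mem_setOf_eq] at hy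
      exact Bool.not_eq_true _ ▸ (Bool.eq_false_iff.mpr hy)
    exact key x y hxy hS (by rw [hx', hy'])

lemma col_at_free (N : ℕ) (hN : ∀ n, N ≤ n → 2 * c.p n < c.p (n + 1)) (f : ℕ → Bool) :
    col c N f (c.p (N + 1)) = f (c.p (N + 1)) := by
  have h1 : c.p N < c.p (N + 1) := p_strictMono c (by omega)
  have hfind : Nat.find (p_unb c (c.p (N + 1))) = N + 2 := by
    rw [Nat.find_eq_iff]
    constructor
    · exact p_strictMono c (by omega)
    · intro k hk
      push_neg
      exact (p_strictMono c).monotone (by omega : k ≤ N + 1)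
  apply col_free c N f _ h1
  rw [hfind]
  have h3 : 2 * c.p (N + 1) < c.p (N + 2) := by
    have h4 := hN (N + 1) (by omega)
    have e : N + 1 + 1 = N + 2 := by omega
    rwa [e] at h4
  omega

theorem final (hα : 1 < α) (hirr : Irrational α) (N : ℕ)
    (h : ∀ n, N ≤ n → 2 * c.p n < c.p (n + 1)) :
    ∃ A A' : Set ℕ+, Avoids A {m : ℕ+ | ∃ n, (m : ℕ) = c.p n} ∧
      Avoids A' {m : ℕ+ | ∃ n, (m : ℕ) = c.p n} ∧ A' ≠ A ∧ A' ≠ Aᶜ := by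
  classical
  set f0 : ℕ → Bool := fun _ => false with hf0
  set f1 : ℕ → Bool := fun z => decide (z = c.p (N + 1)) with hf1
  refine ⟨{m : ℕ+ | col c N f0 (m : ℕ) = true}, {m : ℕ+ | col c N f1 (m : ℕ) = true},
    avoids_of_proper c hα hirr N h f0, avoids_of_proper c hα hirr N h f1, ?_, ?_⟩
  · -- A' ≠ A : they differ at p (N+1)
    intro he
    set s0 : ℕ+ := ⟨c.p (N + 1), p_pos c (N + 1)⟩ with hs0
    have h1 : col c N f1 (s0 : ℕ) = true := by
      show col c N f1 (c.p (N + 1)) = true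
      rw [col_at_free c N h f1, hf1]
      simp
    have h0 : col c N f0 (s0 : ℕ) = false := by
      show col c N f0 (c.p (N + 1)) = false
      rw [col_at_free c N h f0]
    have hmem : s0 ∈ {m : ℕ+ | col c N f1 (m : ℕ) = true} := h1
    rw [he] at hmem
    have : col c N f0 (s0 : ℕ) = true := hmem
    rw [h0] at this
    exact Bool.false_ne_true this
  · -- A' ≠ Aᶜ : they agree at 1
    intro he
    have hone : (1 : ℕ) ≤ c.p N := p_pos c N
    have hb : col c N f1 ((1 : ℕ+) : ℕ) = col c N f0 ((1 : ℕ+) : ℕ) := by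
      rw [PNat.one_coe, col_base c N f1 1 hone, col_base c N f0 1 hone]
    have h1 : (1 : ℕ+) ∈ {m : ℕ+ | col c N f1 (m : ℕ) = true} ↔
        (1 : ℕ+) ∈ {m : ℕ+ | col c N f0 (m : ℕ) = true} := by
      simp only [Set.mem_setOf_eq, hb]
    rw [he] at h1
    simp only [Set.mem_compl_iff, Set.mem_setOf_eq] at h1
    tauto

end CFaux

/-- If `p (n+1) > 2 * p n` for all `n ≥ N` (only finitely many partial
quotients equal `1`), then the set of convergent numerators admits more than
one avoiding partition of `ℕ+`. -/
theorem stmt17 (α : ℝ) (hα : 1 < α) (hirr : Irrational α) (c : CF α)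
    (N : ℕ) (h : ∀ n, N ≤ n → 2 * c.p n < c.p (n + 1)) :
    ∃ A A' : Set ℕ+, Avoids A {m : ℕ+ | ∃ n, (m : ℕ) = c.p n} ∧
      Avoids A' {m : ℕ+ | ∃ n, (m : ℕ) = c.p n} ∧ A' ≠ A ∧ A' ≠ Aᶜ :=
  CFaux.final c hα hirr N h
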